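/- The Bayesian prediction strategy with prior π achieves, for every probability distribution γ with KL(γ‖π) < ∞: ∑_{t=1}^T ℓ_log(p_t, y_t) ≤ E_{θ∼γ}[∑_{t=1}^T ℓ_log(p_{θ,t}, y_t)] + KL(γ‖π), where ℓ_log(p,y) = -ln p(y). -/

import Mathlib

open MeasureTheory Finset

/-- The Bayesian prediction strategy with prior `π` achieves, for every probability
distribution `γ ≪ π` with finite KL divergence `KL = ∫ log (dγ/dπ) dγ`:
`∑_t -log p_t(y_t) ≤ E_{θ∼γ}[∑_t -log p_{θ,t}(y_t)] + KL(γ‖π)`. -/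
theorem bayes_logloss_KL_bound
    {Θ : Type*} [MeasurableSpace Θ] (π : Measure Θ) [IsProbabilityMeasure π]
    (T : ℕ) (p : Θ → ℕ → ℝ) (hp : ∀ θ t, 0 < p θ t)
    (Z : ℕ → ℝ) (hZ : ∀ t, Z t = ∫ θ, (∏ s ∈ Finset.range t, p θ s) ∂π)
    (hZpos : ∀ t, 0 < Z t)
    (pt : ℕ → ℝ) (hpt : ∀ t, pt t = Z (t + 1) / Z t)
    (γ : Measure Θ) [IsProbabilityMeasure γ] (hac : γ ≪ π)
    (KL : ℝ) (hKL : KL = ∫ θ, Real.log ((γ.rnDeriv π θ).toReal) ∂γ)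
    (hKLint : Integrable (fun θ => Real.log ((γ.rnDeriv π θ).toReal)) γ)
    (hlossint : Integrable (fun θ => ∑ t ∈ Finset.range T, (-Real.log (p θ t))) γ) :
    ∑ t ∈ Finset.range T, (-Real.log (pt t)) ≤
      (∫ θ, (∑ t ∈ Finset.range T, (-Real.log (p θ t))) ∂γ) + KL := by
  set g : Θ → ℝ := fun θ => ∏ s ∈ Finset.range T, p θ s with hg_def
  have hgpos : ∀ θ, 0 < g θ := fun θ => Finset.prod_pos (fun s _ => hp θ s)
  -- LHS = -log (Z T)
  have hZ0 : Z 0 = 1 := by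
    rw [hZ 0]; simp
  have hlhs : ∑ t ∈ Finset.range T, (-Real.log (pt t)) = -Real.log (Z T) := by
    have : ∀ t, -Real.log (pt t) = -(Real.log (Z (t+1)) - Real.log (Z t)) := by
      intro t
      rw [hpt t, Real.log_div (hZpos (t+1)).ne' (hZpos t).ne']
    simp_rw [this, neg_sub]
    rw [Finset.sum_range_sub' (fun t => Real.log (Z t)), hZ0, Real.log_one, zero_sub]
  -- loss sum = -log g
  have hlog : ∀ θ, Real.log (g θ) = ∑ t ∈ Finset.range T, Real.log (p θ t) := by
    intro θ
    rw [hg_def]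
    exact Real.log_prod (fun s _ => (hp θ s).ne')
  have hsum_eq : ∀ θ, ∑ t ∈ Finset.range T, (-Real.log (p θ t)) = -Real.log (g θ) := by
    intro θ
    simp [hlog θ]
  rw [hlhs]
  -- integrability of g wrt π
  have hg_int : Integrable g π := by
    by_contra h
    have := hZ T
    rw [integral_undef h] at this
    exact absurd this (hZpos T).ne'
  -- integrability of log g wrt γ
  have hlogg_int : Integrable (fun θ => Real.log (g θ)) γ := by
    have := hlossint.neg
    refine this.congr (Filter.Eventually.of_forall fun θ => ?_)
    simp [Pi.neg_apply, hsum_eq θ, hlog θ]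
  have hintsum : ∫ θ, (∑ t ∈ Finset.range T, (-Real.log (p θ t))) ∂γ
      = -∫ θ, Real.log (g θ) ∂γ := by
    rw [← integral_neg]
    exact integral_congr_ae (Filter.Eventually.of_forall fun θ => by simp [hsum_eq θ])
  rw [hintsum, hKL]
  -- suffices : ∫ log g dγ - ∫ log r dγ ≤ log (Z T)
  set r : Θ → ℝ := fun θ => (γ.rnDeriv π θ).toReal with hr_def
  suffices h : ∫ θ, Real.log (g θ) ∂γ - ∫ θ, Real.log (r θ) ∂γ ≤ Real.log (Z T) by
    linarith
  set A : Θ → ℝ := fun θ => g θ / r θ with hA_def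
  have hA_nonneg : ∀ θ, 0 ≤ A θ :=
    fun θ => div_nonneg (hgpos θ).le ENNReal.toReal_nonneg
  -- r • A ≤ g pointwise, and r • A is integrable wrt π
  have hrA_le : ∀ θ, r θ * A θ ≤ g θ := by
    intro θ
    rcases eq_or_ne (r θ) 0 with h0 | h0
    · simp [hA_def, h0, (hgpos θ).le]
    · rw [hA_def, mul_div_cancel₀ _ h0]
  have hrA_nonneg : ∀ θ, 0 ≤ r θ * A θ :=
    fun θ => mul_nonneg ENNReal.toReal_nonneg (hA_nonneg θ)
  have hg_meas : AEStronglyMeasurable g π := hg_int.aestronglyMeasurable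
  have hr_meas : Measurable r := (Measure.measurable_rnDeriv γ π).ennreal_toReal
  have hA_meas : AEStronglyMeasurable A π := by
    have : A = fun θ => g θ * (r θ)⁻¹ := funext fun θ => div_eq_mul_inv _ _
    rw [this]
    exact hg_meas.mul hr_meas.inv.aestronglyMeasurable
  have hrA_meas : AEStronglyMeasurable (fun θ => r θ * A θ) π :=
    hr_meas.aestronglyMeasurable.mul hA_meas
  have hrA_int : Integrable (fun θ => r θ * A θ) π := by
    refine hg_int.mono' hrA_meas (Filter.Eventually.of_forall fun θ => ?_)
    rw [Real.norm_eq_abs, abs_of_nonneg (hrA_nonneg θ)]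
    exact hrA_le θ
  have hA_int : Integrable A γ := by
    rw [← integrable_rnDeriv_smul_iff hac]
    exact hrA_int.congr (Filter.Eventually.of_forall fun θ => by simp [hr_def, smul_eq_mul])
  have hintA_eq : ∫ θ, A θ ∂γ = ∫ θ, r θ * A θ ∂π := by
    rw [← integral_rnDeriv_smul hac (f := A)]
    exact integral_congr_ae (Filter.Eventually.of_forall fun θ => by simp [hr_def, smul_eq_mul])
  have hintA_le : ∫ θ, A θ ∂γ ≤ Z T := by
    rw [hintA_eq, hZ T]
    exact integral_mono hrA_int hg_int hrA_le
  -- A > 0 a.e. γ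
  have hr_pos : ∀ᵐ θ ∂γ, 0 < r θ := by
    filter_upwards [Measure.rnDeriv_pos hac, hac.ae_le (Measure.rnDeriv_lt_top γ π)]
      with θ h1 h2
    exact ENNReal.toReal_pos h1.ne' h2.ne
  have hA_pos : ∀ᵐ θ ∂γ, 0 < A θ := by
    filter_upwards [hr_pos] with θ h1
    exact div_pos (hgpos θ) h1
  set c : ℝ := ∫ θ, A θ ∂γ with hc_def
  have hc_pos : 0 < c := by
    refine (integral_pos_iff_support_of_nonneg_ae
      (Filter.Eventually.of_forall hA_nonneg) hA_int).2 ?_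
    by_contra hne
    have hz : γ (Function.support A) = 0 := by
      simpa using le_antisymm (not_lt.mp hne) zero_le
    have hA0 : ∀ᵐ θ ∂γ, A θ = 0 := by
      rw [MeasureTheory.ae_iff]
      exact hz
    obtain ⟨θ, h1, h2⟩ := (hA_pos.and hA0).exists
    exact h1.ne' h2
  -- log A = log g - log r
  have hlogA_eq : ∀ᵐ θ ∂γ, Real.log (A θ) = Real.log (g θ) - Real.log (r θ) := by
    filter_upwards [hr_pos] with θ h1
    rw [hA_def, Real.log_div (hgpos θ).ne' h1.ne']
  have hlogA_int : Integrable (fun θ => Real.log (A θ)) γ :=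
    (hlogg_int.sub hKLint).congr (hlogA_eq.mono fun θ h => h.symm)
  -- Jensen via log x ≤ log c + (x - c)/c
  have hjensen : ∫ θ, Real.log (A θ) ∂γ ≤ Real.log c := by
    have hb : ∀ᵐ θ ∂γ, Real.log (A θ) ≤ A θ / c + (Real.log c - 1) := by
      filter_upwards [hA_pos] with θ h1
      have h2 : Real.log (A θ / c) ≤ A θ / c - 1 :=
        Real.log_le_sub_one_of_pos (div_pos h1 hc_pos)
      rw [Real.log_div h1.ne' hc_pos.ne'] at h2
      linarith
    calc ∫ θ, Real.log (A θ) ∂γ ≤ ∫ θ, (A θ / c + (Real.log c - 1)) ∂γ :=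
          integral_mono_ae hlogA_int
            ((hA_int.div_const c).add (integrable_const _)) hb
      _ = Real.log c := by
          rw [integral_add (hA_int.div_const c) (integrable_const _),
            integral_div, integral_const]
          simp only [measure_univ, ENNReal.toReal_one, probReal_univ, one_smul, smul_eq_mul, one_mul]
          rw [← hc_def, div_self hc_pos.ne']
          ring
  have hlogA_int_eq : ∫ θ, Real.log (A θ) ∂γ
      = ∫ θ, Real.log (g θ) ∂γ - ∫ θ, Real.log (r θ) ∂γ := by
    rw [← integral_sub hlogg_int hKLint]
    exact integral_congr_ae hlogA_eq
  have := hjensen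
  rw [hlogA_int_eq] at this
  exact this.trans (Real.log_le_log hc_pos hintA_le)
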